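/- Let ṽ = (a, q̃, w̃) be a triple of bounded continuous real functions on ℝ with a and w̃ strictly positive, and let λ ∈ ℝ and x ∈ ℝ be fixed. Then the map Θ ↦ θ_λ(x, Θ; ṽ) is a strictly increasing homeomorphism of ℝ onto itself, and its inverse is the map Θ ↦ θ_λ(−x, Θ; ṽ·x), where ṽ·x denotes the translated triple (a(·+x), q̃(·+x), w̃(·+x)). -/

import Mathlib

open Filter Topology MeasureTheory Set

noncomputable section

/-- A continuous function `f : ℝ → E` is Bohr almost periodic if every sequence of reals
has a subsequence along which the translates converge uniformly on `ℝ`. -/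
def BohrAP {E : Type*} [NormedAddCommGroup E] (f : ℝ → E) : Prop :=
  Continuous f ∧ ∀ t : ℕ → ℝ, ∃ (s : ℕ → ℕ) (g : ℝ → E),
    StrictMono s ∧ TendstoUniformly (fun n x => f (x + t (s n))) g atTop

/-- The hull of `f`: uniform limits of sequences of translates of `f`. -/
def Hull {E : Type*} [NormedAddCommGroup E] (f : ℝ → E) : Set (ℝ → E) :=
  {g | ∃ t : ℕ → ℝ, TendstoUniformly (fun n x => f (x + t n)) g atTop}

/-- `AP₊(ℝ,ℝ)`: Bohr almost periodic functions all of whose hull elements are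
strictly positive at every point. -/
def APplus (f : ℝ → ℝ) : Prop :=
  BohrAP f ∧ ∀ g ∈ Hull f, ∀ x : ℝ, 0 < g x

/-- The set of Fourier exponents of `f`: those `l` for which the Fourier coefficient
`lim_{T→∞} (1/T) ∫₀^T f(x) e^{-i l x} dx` is nonzero (encoded as: the averages do not
tend to `0`; for Bohr almost periodic `f` the limit always exists). -/
def freqSet (f : ℝ → ℝ) : Set ℝ :=
  {l : ℝ | ¬ Tendsto
      (fun T : ℝ => (T : ℂ)⁻¹ *
        ∫ x in (0:ℝ)..T, (f x : ℂ) * Complex.exp (-(Complex.I * (l : ℂ) * (x : ℂ))))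
      atTop (𝓝 0)}

/-- The frequency module of `f`: the smallest additive subgroup of `ℝ` containing the
Fourier exponents of `f`. -/
def freqModule (f : ℝ → ℝ) : AddSubgroup ℝ := AddSubgroup.closure (freqSet f)

/-- `θ` solves the Prüfer equation `θ' = a cos²θ + (λ w - q) sin²θ`. -/
def IsPruefer (a q w : ℝ → ℝ) (lam : ℝ) (θ : ℝ → ℝ) : Prop :=
  ∀ x : ℝ, HasDerivAt θ
    (a x * Real.cos (θ x) ^ 2 + (lam * w x - q x) * Real.sin (θ x) ^ 2) x

/-- `φ` is a (real) solution of the Sturm–Liouville equation `-(pφ')' + qφ = λ w φ`: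
`φ` is `C¹`, `pφ'` is `C¹`, and the equation holds everywhere. -/
def IsSLSolution (p q w : ℝ → ℝ) (lam : ℝ) (φ : ℝ → ℝ) : Prop :=
  ContDiff ℝ 1 φ ∧ ContDiff ℝ 1 (fun x => p x * deriv φ x) ∧
    ∀ x : ℝ, -(deriv (fun y => p y * deriv φ y) x) + q x * φ x = lam * w x * φ x

namespace PrfAux

open scoped NNReal

lemma cos_sq_lip : LipschitzWith 2 (fun y : ℝ => Real.cos y ^ 2) := by
  have hd : ∀ y : ℝ, HasDerivAt (fun y : ℝ => Real.cos y ^ 2)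
      (2 * Real.cos y ^ 1 * (-Real.sin y)) y := fun y => (Real.hasDerivAt_cos y).pow 2
  apply lipschitzWith_of_nnnorm_deriv_le (fun y => (hd y).differentiableAt)
  intro y
  rw [(hd y).deriv, ← NNReal.coe_le_coe, coe_nnnorm]
  push_cast
  rw [Real.norm_eq_abs]
  have h1 := Real.abs_cos_le_one y
  have h2 := Real.abs_sin_le_one y
  calc |2 * Real.cos y ^ 1 * -Real.sin y| = 2 * |Real.cos y| * |Real.sin y| := by
        rw [abs_mul, abs_mul, abs_neg]; simp [abs_of_nonneg]
    _ ≤ 2 * 1 * 1 := by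
        apply mul_le_mul _ h2 (abs_nonneg _) (by norm_num)
        apply mul_le_mul_of_nonneg_left h1 (by norm_num)
    _ = 2 := by norm_num

lemma sin_sq_lip : LipschitzWith 2 (fun y : ℝ => Real.sin y ^ 2) := by
  have hd : ∀ y : ℝ, HasDerivAt (fun y : ℝ => Real.sin y ^ 2)
      (2 * Real.sin y ^ 1 * (Real.cos y)) y := fun y => (Real.hasDerivAt_sin y).pow 2
  apply lipschitzWith_of_nnnorm_deriv_le (fun y => (hd y).differentiableAt)
  intro y
  rw [(hd y).deriv, ← NNReal.coe_le_coe, coe_nnnorm]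
  push_cast
  rw [Real.norm_eq_abs]
  have h1 := Real.abs_cos_le_one y
  have h2 := Real.abs_sin_le_one y
  calc |2 * Real.sin y ^ 1 * Real.cos y| = 2 * |Real.sin y| * |Real.cos y| := by
        rw [abs_mul, abs_mul]; simp [abs_of_nonneg]
    _ ≤ 2 * 1 * 1 := by
        apply mul_le_mul _ h1 (abs_nonneg _) (by norm_num)
        apply mul_le_mul_of_nonneg_left h2 (by norm_num)
    _ = 2 := by norm_num

/-- The Prüfer vector field with coefficients `A`, `B`. -/
noncomputable def vf (A B : ℝ → ℝ) (t y : ℝ) : ℝ := A t * Real.cos y ^ 2 + B t * Real.sin y ^ 2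

lemma vf_lip {A B : ℝ → ℝ} {Ca Cb : ℝ} (hA : ∀ t, |A t| ≤ Ca) (hB : ∀ t, |B t| ≤ Cb)
    (t : ℝ) : LipschitzWith ((2 * Ca + 2 * Cb).toNNReal) (vf A B t) := by
  apply LipschitzWith.of_dist_le_mul
  intro y z
  have hcc := cos_sq_lip.dist_le_mul y z
  have hss := sin_sq_lip.dist_le_mul y z
  push_cast at hcc hss
  rw [Real.dist_eq] at hcc hss
  have h1 : dist (A t * Real.cos y ^ 2) (A t * Real.cos z ^ 2) ≤ Ca * (2 * dist y z) := by
    rw [Real.dist_eq, ← mul_sub, abs_mul]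
    exact mul_le_mul (hA t) hcc (abs_nonneg _) ((abs_nonneg _).trans (hA t))
  have h2 : dist (B t * Real.sin y ^ 2) (B t * Real.sin z ^ 2) ≤ Cb * (2 * dist y z) := by
    rw [Real.dist_eq, ← mul_sub, abs_mul]
    exact mul_le_mul (hB t) hss (abs_nonneg _) ((abs_nonneg _).trans (hB t))
  have h3 : dist (vf A B t y) (vf A B t z) ≤ Ca * (2 * dist y z) + Cb * (2 * dist y z) :=
    dist_add_add_le_of_le h1 h2
  have h4 : (((2 * Ca + 2 * Cb).toNNReal : ℝ≥0) : ℝ) = max (2 * Ca + 2 * Cb) 0 :=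
    Real.coe_toNNReal' _
  rw [h4]
  have h6 : (2 * Ca + 2 * Cb) * dist y z ≤ max (2 * Ca + 2 * Cb) 0 * dist y z :=
    mul_le_mul_of_nonneg_right (le_max_left _ _) dist_nonneg
  nlinarith [h3, h6]

lemma vf_bound {A B : ℝ → ℝ} {Ca Cb : ℝ} (hA : ∀ t, |A t| ≤ Ca) (hB : ∀ t, |B t| ≤ Cb)
    (t y : ℝ) : ‖vf A B t y‖ ≤ Ca + Cb := by
  rw [Real.norm_eq_abs, vf]
  have hc : |Real.cos y ^ 2| ≤ 1 := by
    rw [abs_of_nonneg (sq_nonneg _)]; exact Real.cos_sq_le_one y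
  have hs : |Real.sin y ^ 2| ≤ 1 := by
    rw [abs_of_nonneg (sq_nonneg _)]; exact Real.sin_sq_le_one y
  have hCa : (0:ℝ) ≤ Ca := (abs_nonneg _).trans (hA t)
  have hCb : (0:ℝ) ≤ Cb := (abs_nonneg _).trans (hB t)
  calc |A t * Real.cos y ^ 2 + B t * Real.sin y ^ 2|
      ≤ |A t * Real.cos y ^ 2| + |B t * Real.sin y ^ 2| := abs_add_le _ _
    _ ≤ Ca * 1 + Cb * 1 := add_le_add
        (by rw [abs_mul]; exact mul_le_mul (hA t) hc (abs_nonneg _) hCa)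
        (by rw [abs_mul]; exact mul_le_mul (hB t) hs (abs_nonneg _) hCb)
    _ = Ca + Cb := by ring

lemma unique_global {v : ℝ → ℝ → ℝ} {K : ℝ≥0} (hv : ∀ t, LipschitzWith K (v t))
    {f g : ℝ → ℝ} (hf : ∀ t, HasDerivAt f (v t (f t)) t)
    (hg : ∀ t, HasDerivAt g (v t (g t)) t) {t₀ : ℝ} (heq : f t₀ = g t₀) (t : ℝ) :
    f t = g t := by
  have h1 : min t₀ t - 1 < t₀ := by linarith [min_le_left t₀ t]
  have h2 : t₀ < max t₀ t + 1 := by linarith [le_max_left t₀ t]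
  have h3 : min t₀ t - 1 < t := by linarith [min_le_right t₀ t]
  have h4 : t < max t₀ t + 1 := by linarith [le_max_right t₀ t]
  exact ODE_solution_unique_of_mem_Ioo (s := fun _ => Set.univ)
    (fun t _ => (hv t).lipschitzOnWith) (Set.mem_Ioo.mpr ⟨h1, h2⟩)
    (fun s _ => ⟨hf s, trivial⟩) (fun s _ => ⟨hg s, trivial⟩) heq (Set.mem_Ioo.mpr ⟨h3, h4⟩)

lemma pos_everywhere {f : ℝ → ℝ} (hf : Continuous f) (h0 : 0 < f 0)
    (hne : ∀ t, f t ≠ 0) (x : ℝ) : 0 < f x := by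
  by_contra h
  push_neg at h
  have hx : f x < 0 := lt_of_le_of_ne h (hne x)
  rcases le_total 0 x with hx0 | hx0
  · obtain ⟨c, _, hc⟩ := intermediate_value_Icc' hx0 hf.continuousOn
      (show (0:ℝ) ∈ Icc (f x) (f 0) from ⟨hx.le, h0.le⟩)
    exact hne c hc
  · obtain ⟨c, _, hc⟩ := intermediate_value_Icc hx0 hf.continuousOn
      (show (0:ℝ) ∈ Icc (f x) (f 0) from ⟨hx.le, h0.le⟩)
    exact hne c hc


lemma exists_global {A B : ℝ → ℝ} {Ca Cb : ℝ} (hA : Continuous A) (hB : Continuous B)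
    (hAb : ∀ t, |A t| ≤ Ca) (hBb : ∀ t, |B t| ≤ Cb) (Θ : ℝ) :
    ∃ θ : ℝ → ℝ, θ 0 = Θ ∧ ∀ t, HasDerivAt θ (vf A B t (θ t)) t := by
  have hCa : (0:ℝ) ≤ Ca := (abs_nonneg _).trans (hAb 0)
  have hCb : (0:ℝ) ≤ Cb := (abs_nonneg _).trans (hBb 0)
  have hpl : ∀ n : ℕ, ∃ f : ℝ → ℝ, f 0 = Θ ∧ ∀ t ∈ Icc (-((n:ℝ)+1)) ((n:ℝ)+1),
      HasDerivWithinAt f (vf A B t (f t)) (Icc (-((n:ℝ)+1)) ((n:ℝ)+1)) t := by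
    intro n
    have hn : (0:ℝ) < (n:ℝ) + 1 := by positivity
    have h : IsPicardLindelof (vf A B) (tmin := -((n:ℝ)+1)) (tmax := (n:ℝ)+1)
        ⟨0, ⟨by linarith, by linarith⟩⟩ Θ ⟨(Ca + Cb) * ((n:ℝ)+1), by nlinarith⟩ 0
        ⟨Ca + Cb, by linarith⟩ ((2 * Ca + 2 * Cb).toNNReal) :=
      { lipschitzOnWith := fun t _ => (vf_lip hAb hBb t).lipschitzOnWith
        continuousOn := fun y _ => by
          apply Continuous.continuousOn
          exact (hA.mul continuous_const).add (hB.mul continuous_const)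
        norm_le := fun t _ y _ => vf_bound hAb hBb t y
        mul_max_le := by
          have : max (((n:ℝ)+1) - 0) (0 - -((n:ℝ)+1)) = (n:ℝ)+1 := by
            rw [sub_zero, zero_sub, neg_neg, max_self]
          show (Ca + Cb) * max (((n:ℝ)+1) - 0) (0 - -((n:ℝ)+1)) ≤ (Ca + Cb) * ((n:ℝ)+1) - 0
          rw [this, sub_zero] }
    obtain ⟨f, hf0, hfd⟩ := h.exists_eq_forall_mem_Icc_hasDerivWithinAt₀
    exact ⟨f, hf0, hfd⟩
  choose f hf0 hfd using hpl
  have hder : ∀ n : ℕ, ∀ t ∈ Ioo (-((n:ℝ)+1)) ((n:ℝ)+1), HasDerivAt (f n) (vf A B t (f n t)) t :=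
    fun n t ht => (hfd n t (Ioo_subset_Icc_self ht)).hasDerivAt (Icc_mem_nhds ht.1 ht.2)
  have hcont : ∀ n : ℕ, ContinuousOn (f n) (Icc (-((n:ℝ)+1)) ((n:ℝ)+1)) :=
    fun n t ht => (hfd n t ht).continuousWithinAt
  have key : ∀ k n : ℕ, k ≤ n → EqOn (f k) (f n) (Icc (-((k:ℝ)+1)) ((k:ℝ)+1)) := by
    intro k n hkn
    have hkn' : ((k:ℝ)+1) ≤ ((n:ℝ)+1) := by
      have : ((k:ℝ)) ≤ (n:ℝ) := Nat.cast_le.mpr hkn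
      linarith
    have hsub : Icc (-((k:ℝ)+1)) ((k:ℝ)+1) ⊆ Icc (-((n:ℝ)+1)) ((n:ℝ)+1) :=
      Icc_subset_Icc (by linarith) hkn'
    have hsub' : Ioo (-((k:ℝ)+1)) ((k:ℝ)+1) ⊆ Ioo (-((n:ℝ)+1)) ((n:ℝ)+1) :=
      Ioo_subset_Ioo (by linarith) hkn'
    have hk0 : (0:ℝ) < (k:ℝ)+1 := by positivity
    exact ODE_solution_unique_of_mem_Icc (s := fun _ => Set.univ)
      (fun t _ => (vf_lip hAb hBb t).lipschitzOnWith)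
      (t₀ := 0) ⟨by linarith, by linarith⟩
      (hcont k) (fun t ht => hder k t ht) (fun _ _ => trivial)
      ((hcont n).mono hsub) (fun t ht => hder n t (hsub' ht)) (fun _ _ => trivial)
      (by rw [hf0, hf0])
  have hmem : ∀ s : ℝ, s ∈ Icc (-((⌊|s|⌋₊:ℝ)+1)) ((⌊|s|⌋₊:ℝ)+1) := by
    intro s
    have := (Nat.lt_floor_add_one |s|).le
    exact mem_Icc.mpr (abs_le.mp this)
  refine ⟨fun t => f ⌊|t|⌋₊ t, by simpa using hf0 0, ?_⟩
  intro t
  set n := ⌊|t|⌋₊ with hn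
  have htn : |t| < (n:ℝ) + 1 := Nat.lt_floor_add_one |t|
  have hopen : {s : ℝ | |s| < (n:ℝ) + 1} ∈ 𝓝 t :=
    (isOpen_lt continuous_abs continuous_const).mem_nhds htn
  have hagree : ∀ s ∈ {s : ℝ | |s| < (n:ℝ) + 1}, (fun u => f ⌊|u|⌋₊ u) s = f n s := by
    intro s hs
    have hs' : |s| < (n:ℝ) + 1 := hs
    rcases le_total (⌊|s|⌋₊) n with h | h
    · exact key _ _ h (hmem s)
    · exact (key _ _ h (mem_Icc.mpr (abs_le.mp hs'.le))).symm
  have hevt : (fun u => f ⌊|u|⌋₊ u) =ᶠ[𝓝 t] f n := eventually_of_mem hopen hagree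
  have h1 : HasDerivAt (f n) (vf A B t (f n t)) t :=
    hder n t ⟨(abs_lt.mp htn).1, (abs_lt.mp htn).2⟩
  have h2 := h1.congr_of_eventuallyEq hevt
  exact h2


end PrfAux

/-- for fixed `λ` and `x`, the map `Θ ↦ θ_λ(x, Θ; ṽ)` is a strictly
increasing self-homeomorphism of `ℝ`, with inverse `Θ ↦ θ_λ(-x, Θ; ṽ·x)`. -/
theorem pruefer_homeomorph (a q w : ℝ → ℝ)
    (ha : Continuous a) (hq : Continuous q) (hw : Continuous w)
    (hab : ∃ C : ℝ, ∀ x : ℝ, |a x| ≤ C) (hqb : ∃ C : ℝ, ∀ x : ℝ, |q x| ≤ C)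
    (hwb : ∃ C : ℝ, ∀ x : ℝ, |w x| ≤ C)
    (hapos : ∀ x : ℝ, 0 < a x) (hwpos : ∀ x : ℝ, 0 < w x)
    (lam x : ℝ) :
    ∃ F G : ℝ → ℝ,
      (∀ (Θ : ℝ) (θ : ℝ → ℝ), IsPruefer a q w lam θ → θ 0 = Θ → θ x = F Θ) ∧
      (∀ (Θ : ℝ) (θ : ℝ → ℝ),
        IsPruefer (fun y => a (y + x)) (fun y => q (y + x)) (fun y => w (y + x)) lam θ →
        θ 0 = Θ → θ (-x) = G Θ) ∧
      StrictMono F ∧ Continuous F ∧ Continuous G ∧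
      (∀ Θ : ℝ, G (F Θ) = Θ) ∧ (∀ Θ : ℝ, F (G Θ) = Θ) := by
  classical
  obtain ⟨Ca, hab⟩ := hab
  obtain ⟨Cq, hqb⟩ := hqb
  obtain ⟨Cw, hwb⟩ := hwb
  have hBb0 : ∀ s : ℝ, |lam * w s - q s| ≤ |lam| * Cw + Cq := by
    intro s
    calc |lam * w s - q s| ≤ |lam * w s| + |q s| := abs_sub _ _
      _ ≤ |lam| * Cw + Cq := by
          rw [abs_mul]
          exact add_le_add (mul_le_mul_of_nonneg_left (hwb s) (abs_nonneg _)) (hqb s)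
  have hBc : Continuous (fun s => lam * w s - q s) := (continuous_const.mul hw).sub hq
  have hA'c : Continuous (fun y => a (y + x)) := ha.comp (continuous_id.add continuous_const)
  have hB'c : Continuous (fun y => lam * w (y + x) - q (y + x)) :=
    hBc.comp (continuous_id.add continuous_const)
  -- solutions of the original and shifted systems
  choose sol hsol0 hsold using fun Θ => PrfAux.exists_global ha hBc hab hBb0 Θ
  choose sol' hsol0' hsold' using fun Θ =>
    PrfAux.exists_global hA'c hB'c (fun t => hab (t + x)) (fun t => hBb0 (t + x)) Θ
  have hlip : ∀ t, LipschitzWith ((2 * Ca + 2 * (|lam| * Cw + Cq)).toNNReal)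
      (PrfAux.vf a (fun s => lam * w s - q s) t) := PrfAux.vf_lip hab hBb0
  have hlip' : ∀ t, LipschitzWith ((2 * Ca + 2 * (|lam| * Cw + Cq)).toNNReal)
      (PrfAux.vf (fun y => a (y + x)) (fun y => lam * w (y + x) - q (y + x)) t) :=
    PrfAux.vf_lip (fun t => hab (t + x)) (fun t => hBb0 (t + x))
  -- uniqueness: any solution equals sol / sol'
  have hFdef : ∀ (Θ : ℝ) (θ : ℝ → ℝ),
      (∀ t, HasDerivAt θ (PrfAux.vf a (fun s => lam * w s - q s) t (θ t)) t) →
      θ 0 = Θ → ∀ t, θ t = sol Θ t := by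
    intro Θ θ hθ h0 t
    exact PrfAux.unique_global hlip hθ (hsold Θ) (by rw [h0, hsol0]) t
  have hGdef : ∀ (Θ : ℝ) (θ : ℝ → ℝ),
      (∀ t, HasDerivAt θ
        (PrfAux.vf (fun y => a (y + x)) (fun y => lam * w (y + x) - q (y + x)) t (θ t)) t) →
      θ 0 = Θ → ∀ t, θ t = sol' Θ t := by
    intro Θ θ hθ h0 t
    exact PrfAux.unique_global hlip' hθ (hsold' Θ) (by rw [h0, hsol0']) t
  -- translates of solutions solve the shifted systems
  have hshift : ∀ (Θ : ℝ) (t : ℝ), HasDerivAt (fun y => sol Θ (y + x))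
      (PrfAux.vf (fun y => a (y + x)) (fun y => lam * w (y + x) - q (y + x)) t
        (sol Θ (t + x))) t := by
    intro Θ t
    have h := (hsold Θ (t + x)).comp t ((hasDerivAt_id t).add_const x)
    have h2 : PrfAux.vf (fun y => a (y + x)) (fun y => lam * w (y + x) - q (y + x)) t
        (sol Θ (t + x)) = PrfAux.vf a (fun s => lam * w s - q s) (t + x) (sol Θ (t + x)) * 1 := by
      simp [PrfAux.vf]
    rw [h2]
    exact h
  have hshift' : ∀ (Θ : ℝ) (t : ℝ), HasDerivAt (fun y => sol' Θ (y - x))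
      (PrfAux.vf a (fun s => lam * w s - q s) t (sol' Θ (t - x))) t := by
    intro Θ t
    have h := (hsold' Θ (t - x)).comp t ((hasDerivAt_id t).sub_const x)
    have h2 : PrfAux.vf a (fun s => lam * w s - q s) t (sol' Θ (t - x)) =
        PrfAux.vf (fun y => a (y + x)) (fun y => lam * w (y + x) - q (y + x)) (t - x)
          (sol' Θ (t - x)) * 1 := by
      simp [PrfAux.vf, show t - x + x = t from by ring]
    rw [h2]
    exact h
  -- the inverse identities
  have hGF : ∀ Θ : ℝ, sol' (sol Θ x) (-x) = Θ := by
    intro Θ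
    have h := hGdef (sol Θ x) (fun y => sol Θ (y + x)) (hshift Θ)
      (by show sol Θ (0 + x) = sol Θ x; rw [zero_add]) (-x)
    calc sol' (sol Θ x) (-x) = sol Θ (-x + x) := h.symm
      _ = Θ := by rw [show -x + x = 0 from by ring, hsol0]
  have hFG : ∀ Θ : ℝ, sol (sol' Θ (-x)) x = Θ := by
    intro Θ
    have h := hFdef (sol' Θ (-x)) (fun y => sol' Θ (y - x)) (hshift' Θ)
      (by show sol' Θ (0 - x) = sol' Θ (-x); rw [zero_sub]) x
    calc sol (sol' Θ (-x)) x = sol' Θ (x - x) := h.symm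
      _ = Θ := by rw [show x - x = 0 from by ring, hsol0']
  -- strict monotonicity
  have hFm : StrictMono (fun Θ => sol Θ x) := by
    intro Θ1 Θ2 h12
    have hne : ∀ t, sol Θ1 t ≠ sol Θ2 t := by
      intro t h
      have := PrfAux.unique_global hlip (hsold Θ1) (hsold Θ2) h 0
      rw [hsol0, hsol0] at this
      exact absurd this (ne_of_lt h12)
    have hc : Continuous (fun t => sol Θ2 t - sol Θ1 t) := by
      have c2 : Continuous (sol Θ2) :=
        continuous_iff_continuousAt.mpr fun t => (hsold Θ2 t).continuousAt
      have c1 : Continuous (sol Θ1) :=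
        continuous_iff_continuousAt.mpr fun t => (hsold Θ1 t).continuousAt
      exact c2.sub c1
    have h0 : 0 < sol Θ2 0 - sol Θ1 0 := by rw [hsol0, hsol0]; linarith
    have hpos := PrfAux.pos_everywhere hc h0
      (fun t h => hne t (sub_eq_zero.mp h).symm) x
    simpa using sub_pos.mp hpos
  have hGm : StrictMono (fun Θ => sol' Θ (-x)) := by
    intro Θ1 Θ2 h12
    have hne : ∀ t, sol' Θ1 t ≠ sol' Θ2 t := by
      intro t h
      have := PrfAux.unique_global hlip' (hsold' Θ1) (hsold' Θ2) h 0
      rw [hsol0', hsol0'] at this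
      exact absurd this (ne_of_lt h12)
    have hc : Continuous (fun t => sol' Θ2 t - sol' Θ1 t) := by
      have c2 : Continuous (sol' Θ2) :=
        continuous_iff_continuousAt.mpr fun t => (hsold' Θ2 t).continuousAt
      have c1 : Continuous (sol' Θ1) :=
        continuous_iff_continuousAt.mpr fun t => (hsold' Θ1 t).continuousAt
      exact c2.sub c1
    have h0 : 0 < sol' Θ2 0 - sol' Θ1 0 := by rw [hsol0', hsol0']; linarith
    have hpos := PrfAux.pos_everywhere hc h0
      (fun t h => hne t (sub_eq_zero.mp h).symm) (-x)
    simpa using sub_pos.mp hpos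
  -- continuity from monotone surjectivity
  have hFsurj : Function.Surjective (fun Θ => sol Θ x) := fun Θ => ⟨sol' Θ (-x), hFG Θ⟩
  have hGsurj : Function.Surjective (fun Θ => sol' Θ (-x)) := fun Θ => ⟨sol Θ x, hGF Θ⟩
  have hFc : Continuous (fun Θ => sol Θ x) := by
    have h := (StrictMono.orderIsoOfSurjective _ hFm hFsurj).continuous
    rwa [StrictMono.coe_orderIsoOfSurjective] at h
  have hGc : Continuous (fun Θ => sol' Θ (-x)) := by
    have h := (StrictMono.orderIsoOfSurjective _ hGm hGsurj).continuous
    rwa [StrictMono.coe_orderIsoOfSurjective] at h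
  refine ⟨fun Θ => sol Θ x, fun Θ => sol' Θ (-x),
    fun Θ θ hθ h0 => hFdef Θ θ (fun t => hθ t) h0 x,
    fun Θ θ hθ h0 => hGdef Θ θ (fun t => hθ t) h0 (-x),
    hFm, hFc, hGc, hGF, hFG⟩
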